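/- Let μ, λ, γ, η_s, η_p be complex constants with γ² ≠ η_s·η_p. For every A_s, A_p ∈ ℂ and every z ∈ ℝ, setting u_s(z) := A_s·exp(−η_s·z), u_p(z) := A_p·exp(−η_p·z), u_x := −u_s′ + iγ·u_p, u_z := iγ·u_s + u_p′, σ_xz := μ·(u_x′ + iγ·u_z), and σ_zz := (λ+2μ)·u_z′ + iγλ·u_x, one has σ_xz(z) = Z₁₁·u_x(z) + Z₁₂·u_z(z) and σ_zz(z) = Z₂₁·u_x(z) + Z₂₂·u_z(z), where Z₁₁ = μ·η_p·(η_s² − γ²)/(γ² − η_s·η_p), Z₁₂ = iγμ·(γ² + η_s² − 2η_s·η_p)/(γ² − η_s·η_p), Z₂₁ = iγ·(2μ·η_s·η_p − (λ+2μ)·η_p² + λγ²)/(γ² − η_s·η_p), and Z₂₂ = (λ+2μ)·η_s·(η_p² − γ²)/(γ² − η_s·η_p). -/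

import Mathlib

lemma expDeriv (A e : ℂ) (z : ℝ) :
    HasDerivAt (fun t : ℝ => A * Complex.exp (-e * (t : ℂ))) (-e * (A * Complex.exp (-e * (z : ℂ)))) z := by
  have h0 : HasDerivAt (fun t : ℝ => ((t : ℂ))) 1 z := Complex.ofRealCLM.hasDerivAt
  have h1 : HasDerivAt (fun t : ℝ => (-e) * (t : ℂ)) (-e) z := by
    simpa using h0.const_mul (-e)
  have h2 := (h1.cexp).const_mul A
  rw [show -e * (A * Complex.exp (-e * (z : ℂ))) = A * (Complex.exp (-e * (z : ℂ)) * -e) by ring]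
  exact h2

/-- explicit formulas for the entries of the seismic impedance tensor of a
homogeneous half-space with decaying Rayleigh-wave potentials, when `γ² ≠ η_s·η_p`. -/
theorem impedance_tensor_formulas
    (mu lam ga es ep : ℂ) (h : ga ^ 2 ≠ es * ep) :
    ∀ (As Ap : ℂ) (z : ℝ),
      let us : ℝ → ℂ := fun t => As * Complex.exp (-es * (t : ℂ))
      let up : ℝ → ℂ := fun t => Ap * Complex.exp (-ep * (t : ℂ))
      let ux : ℝ → ℂ := fun t => -(deriv us t) + Complex.I * ga * up t
      let uz : ℝ → ℂ := fun t => Complex.I * ga * us t + deriv up t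
      let sxz : ℝ → ℂ := fun t => mu * (deriv ux t + Complex.I * ga * uz t)
      let szz : ℝ → ℂ := fun t => (lam + 2 * mu) * deriv uz t + Complex.I * ga * lam * ux t
      let Z11 : ℂ := mu * ep * (es ^ 2 - ga ^ 2) / (ga ^ 2 - es * ep)
      let Z12 : ℂ := Complex.I * ga * mu * (ga ^ 2 + es ^ 2 - 2 * es * ep) / (ga ^ 2 - es * ep)
      let Z21 : ℂ := Complex.I * ga * (2 * mu * es * ep - (lam + 2 * mu) * ep ^ 2 + lam * ga ^ 2) /
        (ga ^ 2 - es * ep)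
      let Z22 : ℂ := (lam + 2 * mu) * es * (ep ^ 2 - ga ^ 2) / (ga ^ 2 - es * ep)
      sxz z = Z11 * ux z + Z12 * uz z ∧ szz z = Z21 * ux z + Z22 * uz z := by
  intro As Ap z us up ux uz sxz szz Z11 Z12 Z21 Z22
  have hd : ga ^ 2 - es * ep ≠ 0 := sub_ne_zero.mpr h
  have hus : deriv us = fun t : ℝ => -es * (As * Complex.exp (-es * (t : ℂ))) :=
    funext fun t => (expDeriv As es t).deriv
  have hup : deriv up = fun t : ℝ => -ep * (Ap * Complex.exp (-ep * (t : ℂ))) :=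
    funext fun t => (expDeriv Ap ep t).deriv
  have hux : ux = fun t : ℝ => (es * As) * Complex.exp (-es * (t : ℂ))
      + (Complex.I * ga * Ap) * Complex.exp (-ep * (t : ℂ)) := by
    funext t; simp only [ux, us, up, hus]; ring
  have huz : uz = fun t : ℝ => (Complex.I * ga * As) * Complex.exp (-es * (t : ℂ))
      + (-ep * Ap) * Complex.exp (-ep * (t : ℂ)) := by
    funext t; simp only [uz, us, up, hup]; ring
  have hux' : deriv ux = fun t : ℝ => -es * ((es * As) * Complex.exp (-es * (t : ℂ)))
      + -ep * ((Complex.I * ga * Ap) * Complex.exp (-ep * (t : ℂ))) := by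
    rw [hux]; exact funext fun t => ((expDeriv _ es t).add (expDeriv _ ep t)).deriv
  have huz' : deriv uz = fun t : ℝ => -es * ((Complex.I * ga * As) * Complex.exp (-es * (t : ℂ)))
      + -ep * ((-ep * Ap) * Complex.exp (-ep * (t : ℂ))) := by
    rw [huz]; exact funext fun t => ((expDeriv _ es t).add (expDeriv _ ep t)).deriv
  have hI : Complex.I ^ 2 = -1 := Complex.I_sq
  constructor
  · simp only [sxz, Z11, Z12]
    rw [hux']
    simp only [hux, huz]
    field_simp
    ring_nf
    simp only [Complex.I_sq, pow_succ, Complex.I_sq]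
    ring
  · simp only [szz, Z21, Z22]
    rw [huz']
    simp only [hux, huz]
    field_simp
    ring_nf
    simp only [Complex.I_sq, pow_succ, Complex.I_sq]
    ring
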